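/- Let β be a non-negative integer, let t > 0, and let ρ ≥ 2√t. Then ∫_ρ^∞ s^β e^{-s²/(4t)} ds ≤ 2e · ⌈(β−1)/2⌉! · ρ^{β−1} · t · e^{-ρ²/(4t)}. (Here ⌈(β−1)/2⌉ denotes the ceiling of (β−1)/2, which equals 0 when β = 0, and n! denotes the factorial.) -/

import Mathlib

open MeasureTheory Set Real Filter
open scoped Topology

section GaussTailAux

variable {t ρ : ℝ}

private lemma gt_integrableOn (ht : 0 < t) (n : ℕ) :
    IntegrableOn (fun s : ℝ => s ^ n * Real.exp (-s ^ 2 / (4 * t))) (Set.Ioi ρ) := by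
  have hb : (0:ℝ) < 1 / (4 * t) := by positivity
  have hn : (-1:ℝ) < (n : ℝ) := lt_of_lt_of_le neg_one_lt_zero (Nat.cast_nonneg n)
  have h := (integrable_rpow_mul_exp_neg_mul_sq hb hn).integrableOn (s := Set.Ioi ρ)
  refine h.congr_fun (fun x _ => ?_) measurableSet_Ioi
  show x ^ ((n : ℕ) : ℝ) * Real.exp (-(1 / (4 * t)) * x ^ 2)
      = x ^ n * Real.exp (-x ^ 2 / (4 * t))
  rw [Real.rpow_natCast]
  congr 1
  ring

private lemma gt_tendsto_zero (ht : 0 < t) (n : ℕ) :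
    Tendsto (fun s : ℝ => s ^ n * Real.exp (-s ^ 2 / (4 * t))) atTop (𝓝 0) := by
  have hb : (0:ℝ) < 1 / (4 * t) := by positivity
  have htend : Tendsto (fun x : ℝ => Real.exp (-(1/2) * x)) atTop (𝓝 0) := by
    have h2 : Tendsto (fun x : ℝ => Real.exp (-(x / 2))) atTop (𝓝 0) :=
      Real.tendsto_exp_neg_atTop_nhds_zero.comp (tendsto_id.atTop_div_const two_pos)
    refine h2.congr fun x => by ring_nf
  have h := (rpow_mul_exp_neg_mul_sq_isLittleO_exp_neg hb (n : ℝ)).trans_tendsto htend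
  refine h.congr fun x => ?_
  show x ^ ((n : ℕ) : ℝ) * Real.exp (-(1 / (4 * t)) * x ^ 2)
      = x ^ n * Real.exp (-x ^ 2 / (4 * t))
  rw [Real.rpow_natCast]
  congr 1
  ring

private lemma gt_hasDerivAt (ht : 0 < t) (n : ℕ) (x : ℝ) :
    HasDerivAt (fun s : ℝ => -(2*t) * (s ^ n * Real.exp (-s ^ 2 / (4 * t))))
      (x ^ (n+1) * Real.exp (-x ^ 2 / (4 * t))
        - (2*t*n) * (x ^ (n-1) * Real.exp (-x ^ 2 / (4 * t)))) x := by
  have h1 : HasDerivAt (fun s : ℝ => -s ^ 2 / (4 * t)) (-(2*x) / (4*t)) x := by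
    have := ((hasDerivAt_pow 2 x).neg).div_const (4*t)
    simpa using this
  have h2 := h1.exp
  have h3 := (hasDerivAt_pow n x).mul h2
  have h4 := h3.const_mul (-(2*t))
  refine h4.congr_deriv ?_
  have ht' : t ≠ 0 := ht.ne'
  field_simp
  ring

private lemma gt_key (ht : 0 < t) (hρ : 0 < ρ) (n : ℕ) :
    (∫ s in Set.Ioi ρ, (s ^ (n+1) * Real.exp (-s ^ 2 / (4 * t))
        - (2*t*n) * (s ^ (n-1) * Real.exp (-s ^ 2 / (4 * t)))))
      = 2*t*(ρ ^ n * Real.exp (-ρ ^ 2 / (4 * t))) := by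
  have hint : IntegrableOn (fun x : ℝ => x ^ (n+1) * Real.exp (-x ^ 2 / (4 * t))
      - (2*t*n) * (x ^ (n-1) * Real.exp (-x ^ 2 / (4 * t)))) (Set.Ioi ρ) :=
    (gt_integrableOn ht (n+1)).sub ((gt_integrableOn ht (n-1)).const_mul (2*t*n))
  have htd : Tendsto (fun s : ℝ => -(2*t) * (s ^ n * Real.exp (-s ^ 2 / (4 * t))))
      atTop (𝓝 0) := by
    simpa using (gt_tendsto_zero ht n).const_mul (-(2*t))
  have := integral_Ioi_of_hasDerivAt_of_tendsto' (fun x _ => gt_hasDerivAt ht n x) hint htd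
  rw [this]
  ring

private lemma gt_rec (ht : 0 < t) (hρ : 0 < ρ) (b : ℕ) :
    (∫ s in Set.Ioi ρ, s ^ (b+2) * Real.exp (-s ^ 2 / (4 * t)))
      = 2*t*(ρ ^ (b+1) * Real.exp (-ρ ^ 2 / (4 * t)))
        + (2*t*((b:ℝ)+1)) * ∫ s in Set.Ioi ρ, s ^ b * Real.exp (-s ^ 2 / (4 * t)) := by
  have h := gt_key ht hρ (n := b+1)
  simp only [Nat.add_sub_cancel] at h
  rw [integral_sub (gt_integrableOn ht (b+2)) ((gt_integrableOn ht b).const_mul _),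
    integral_const_mul] at h
  push_cast at h ⊢
  linarith

private lemma gt_I1 (ht : 0 < t) (hρ : 0 < ρ) :
    (∫ s in Set.Ioi ρ, s ^ 1 * Real.exp (-s ^ 2 / (4 * t)))
      = 2*t*Real.exp (-ρ ^ 2 / (4 * t)) := by
  have h := gt_key ht hρ (n := 0)
  simpa using h

private lemma gt_I0 (ht : 0 < t) (hρ : 0 < ρ) :
    (∫ s in Set.Ioi ρ, s ^ 0 * Real.exp (-s ^ 2 / (4 * t)))
      ≤ 2 * ρ⁻¹ * t * Real.exp (-ρ ^ 2 / (4 * t)) := by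
  have hmono : (∫ s in Set.Ioi ρ, s ^ 0 * Real.exp (-s ^ 2 / (4 * t)))
      ≤ ∫ s in Set.Ioi ρ, ρ⁻¹ * (s ^ 1 * Real.exp (-s ^ 2 / (4 * t))) := by
    refine setIntegral_mono_on (gt_integrableOn ht 0)
      ((gt_integrableOn ht 1).const_mul ρ⁻¹) measurableSet_Ioi ?_
    intro x hx
    have hx' : ρ ≤ x := le_of_lt hx
    have h1 : (1:ℝ) ≤ ρ⁻¹ * x := by
      rw [inv_mul_eq_div, le_div_iff₀ hρ]
      simpa using hx'
    have he : 0 < Real.exp (-x ^ 2 / (4 * t)) := Real.exp_pos _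
    calc x ^ 0 * Real.exp (-x ^ 2 / (4 * t)) = 1 * Real.exp (-x ^ 2 / (4 * t)) := by norm_num
      _ ≤ (ρ⁻¹ * x) * Real.exp (-x ^ 2 / (4 * t)) := mul_le_mul_of_nonneg_right h1 he.le
      _ = ρ⁻¹ * (x ^ 1 * Real.exp (-x ^ 2 / (4 * t))) := by ring
  rw [integral_const_mul, gt_I1 ht hρ] at hmono
  calc (∫ s in Set.Ioi ρ, s ^ 0 * Real.exp (-s ^ 2 / (4 * t)))
      ≤ ρ⁻¹ * (2*t*Real.exp (-ρ ^ 2 / (4 * t))) := hmono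
    _ = 2 * ρ⁻¹ * t * Real.exp (-ρ ^ 2 / (4 * t)) := by ring

/-- auxiliary sequence: `gtS k = 2 * ∑_{j ≤ k} k!/j!`. -/
private def gtS : ℕ → ℕ
  | 0 => 2
  | (k+1) => 2 + (k+1) * gtS k

private lemma gtS_eq (k : ℕ) :
    (gtS k : ℝ) = 2 * k.factorial * ∑ j ∈ Finset.range (k+1), 1 / (j.factorial : ℝ) := by
  induction k with
  | zero => simp [gtS]
  | succ k ih =>
    have hfac : ((k+1).factorial : ℝ) ≠ 0 := by positivity
    rw [show gtS (k+1) = 2 + (k+1) * gtS k from rfl]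
    push_cast [ih, Finset.sum_range_succ (n := k+1), Nat.factorial_succ]
    field_simp
    ring

private lemma gtS_le (k : ℕ) : (gtS k : ℝ) ≤ 2 * Real.exp 1 * k.factorial := by
  rw [gtS_eq]
  have h := Real.sum_le_exp_of_nonneg (le_of_lt one_pos) (k+1)
  simp only [one_pow] at h
  calc 2 * (k.factorial : ℝ) * ∑ j ∈ Finset.range (k+1), 1 / (j.factorial : ℝ)
      ≤ 2 * (k.factorial : ℝ) * Real.exp 1 := mul_le_mul_of_nonneg_left h (by positivity)
    _ = 2 * Real.exp 1 * k.factorial := by ring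

private lemma gt_ceil (b : ℕ) : ⌈((b : ℝ) - 1) / 2⌉₊ = b / 2 := by
  match b with
  | 0 => norm_num
  | (n+1) =>
    have h1 : (((n+1 : ℕ) : ℝ) - 1) / 2 = (n : ℝ) / 2 := by push_cast; ring
    rw [h1]
    rcases Nat.even_or_odd n with ⟨m, hm⟩ | ⟨m, hm⟩
    · subst hm
      have h2 : ((m + m : ℕ) : ℝ) / 2 = (m : ℝ) := by push_cast; ring
      rw [h2, Nat.ceil_natCast]
      omega
    · subst hm
      have h2 : ((2*m + 1 : ℕ) : ℝ) / 2 = (m : ℝ) + 1/2 := by push_cast; ring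
      rw [h2]
      have h3 : ⌈(m : ℝ) + 1/2⌉₊ = m + 1 := by
        rw [Nat.ceil_eq_iff (Nat.succ_ne_zero m)]
        constructor
        · push_cast; linarith
        · push_cast; linarith
      rw [h3]
      omega

end GaussTailAux

/-- Lemma 2.4: if `β` is a non-negative integer and `ρ ≥ 2√t` (with `t > 0`), then
`∫_ρ^∞ s^β e^{-s²/(4t)} ds ≤ 2e ⌈(β-1)/2⌉! ρ^{β-1} t e^{-ρ²/(4t)}`. -/
theorem integral_Ioi_pow_mul_gaussian_le
    (β : ℕ) (t ρ : ℝ) (ht : 0 < t) (hρ : 2 * Real.sqrt t ≤ ρ) :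
    (∫ s in Set.Ioi ρ, s ^ β * Real.exp (-s ^ 2 / (4 * t))) ≤
      2 * Real.exp 1 * (Nat.factorial ⌈((β : ℝ) - 1) / 2⌉₊) * ρ ^ ((β : ℝ) - 1) * t *
        Real.exp (-ρ ^ 2 / (4 * t)) := by
  have hst : 0 < Real.sqrt t := Real.sqrt_pos.mpr ht
  have hρ0 : 0 < ρ := lt_of_lt_of_le (by linarith) hρ
  have h4t : 4 * t ≤ ρ ^ 2 := by
    have h := pow_le_pow_left₀ (by positivity) hρ 2
    calc 4 * t = (2 * Real.sqrt t) ^ 2 := by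
          rw [mul_pow, Real.sq_sqrt ht.le]; ring
      _ ≤ ρ ^ 2 := h
  have hE : 0 < Real.exp (-ρ ^ 2 / (4 * t)) := Real.exp_pos _
  have main : ∀ b : ℕ, (∫ s in Set.Ioi ρ, s ^ b * Real.exp (-s ^ 2 / (4 * t)))
      ≤ (gtS (b/2) : ℝ) * ρ ^ ((b : ℝ) - 1) * t * Real.exp (-ρ ^ 2 / (4 * t)) := by
    intro b
    induction b using Nat.twoStepInduction with
    | zero =>
      calc (∫ s in Set.Ioi ρ, s ^ 0 * Real.exp (-s ^ 2 / (4 * t)))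
          ≤ 2 * ρ⁻¹ * t * Real.exp (-ρ ^ 2 / (4 * t)) := gt_I0 ht hρ0
        _ = (gtS 0 : ℝ) * ρ ^ (((0:ℕ) : ℝ) - 1) * t * Real.exp (-ρ ^ 2 / (4 * t)) := by
            rw [show (((0:ℕ) : ℝ) - 1) = -1 by norm_num, Real.rpow_neg_one]
            norm_num [gtS]
    | one =>
      rw [gt_I1 ht hρ0]
      have h1 : ρ ^ (((1:ℕ) : ℝ) - 1) = 1 := by norm_num
      rw [show (1:ℕ)/2 = 0 from rfl, h1]
      norm_num [gtS]
    | more b ih _ =>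
      rw [gt_rec ht hρ0]
      have hS0 : (0:ℝ) ≤ (gtS (b/2) : ℝ) := Nat.cast_nonneg _
      set S' : ℝ := (gtS (b/2) : ℝ) with hS'
      set P : ℝ := ρ ^ ((b : ℝ) - 1) with hP
      have hP0 : 0 < P := Real.rpow_pos_of_pos hρ0 _
      have hpow1 : (ρ : ℝ) ^ (b+1) = P * ρ ^ 2 := by
        rw [hP, ← Real.rpow_natCast ρ (b+1), ← Real.rpow_natCast ρ 2,
          ← Real.rpow_add hρ0]
        congr 1
        push_cast
        ring
      have hpow2 : ρ ^ (((b+2:ℕ) : ℝ) - 1) = P * ρ ^ 2 := by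
        rw [hP, ← Real.rpow_natCast ρ 2, ← Real.rpow_add hρ0]
        congr 1
        push_cast
        ring
      have hdiv : gtS ((b+2)/2) = 2 + (b/2 + 1) * gtS (b/2) := by
        rw [show (b+2)/2 = b/2 + 1 by omega]
        rfl
      rw [hpow2, hdiv]
      set M : ℝ := ((b/2 + 1 : ℕ) : ℝ) with hM
      have hM0 : (0:ℝ) ≤ M := Nat.cast_nonneg _
      have hbM : (b : ℝ) + 1 ≤ 2 * M := by
        rw [hM]
        have h := (show b + 1 ≤ 2 * (b/2 + 1) by omega)
        push_cast
        exact_mod_cast Nat.cast_le.mpr h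
      have step1 : (2*t*((b:ℝ)+1)) * (∫ s in Set.Ioi ρ, s ^ b * Real.exp (-s ^ 2 / (4 * t)))
          ≤ (2*t*((b:ℝ)+1)) * (S' * P * t * Real.exp (-ρ ^ 2 / (4 * t))) := by
        refine mul_le_mul_of_nonneg_left ?_ (by positivity)
        exact ih
      have step2 : (2*t*((b:ℝ)+1)) * (S' * P * t * Real.exp (-ρ ^ 2 / (4 * t)))
          ≤ M * S' * (P * ρ^2) * t * Real.exp (-ρ ^ 2 / (4 * t)) := by
        have key : 2*((b:ℝ)+1)*S'*t ≤ M*S'*ρ^2 := by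
          nlinarith [mul_nonneg (mul_nonneg hS0 ht.le) (by linarith : (0:ℝ) ≤ 2*M - ((b:ℝ)+1)),
            mul_nonneg (mul_nonneg hS0 hM0) (by linarith : (0:ℝ) ≤ ρ^2 - 4*t)]
        nlinarith [mul_le_mul_of_nonneg_right key
          (mul_nonneg (mul_nonneg hP0.le ht.le) hE.le)]
      calc 2*t*(ρ ^ (b+1) * Real.exp (-ρ ^ 2 / (4 * t)))
            + (2*t*((b:ℝ)+1)) * (∫ s in Set.Ioi ρ, s ^ b * Real.exp (-s ^ 2 / (4 * t)))
          ≤ 2*t*(P * ρ^2 * Real.exp (-ρ ^ 2 / (4 * t)))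
            + M * S' * (P * ρ^2) * t * Real.exp (-ρ ^ 2 / (4 * t)) := by
            rw [hpow1]
            exact add_le_add le_rfl (le_trans step1 step2)
        _ = ((2 + M * S')) * (P * ρ^2) * t * Real.exp (-ρ ^ 2 / (4 * t)) := by ring
        _ = ((2 + (b/2 + 1) * gtS (b/2) : ℕ) : ℝ) * (P * ρ^2) * t
              * Real.exp (-ρ ^ 2 / (4 * t)) := by
            rw [hS', hM]
            push_cast
            ring
  rw [gt_ceil β]
  calc (∫ s in Set.Ioi ρ, s ^ β * Real.exp (-s ^ 2 / (4 * t)))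
      ≤ (gtS (β/2) : ℝ) * ρ ^ ((β : ℝ) - 1) * t * Real.exp (-ρ ^ 2 / (4 * t)) := main β
    _ ≤ 2 * Real.exp 1 * (Nat.factorial (β/2)) * ρ ^ ((β : ℝ) - 1) * t
          * Real.exp (-ρ ^ 2 / (4 * t)) := by
        have h := gtS_le (β/2)
        have hrp : (0:ℝ) < ρ ^ ((β : ℝ) - 1) := Real.rpow_pos_of_pos hρ0 _
        nlinarith [mul_pos hrp (mul_pos ht hE)]
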